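/- For every real a > −1, every real λ > 0, every integer ℓ ≥ 1, and every real t ≠ 0, one has ∫_0^1 (1 − v²)^a · (1/(4t)) · ∂/∂t[C_{2ℓ}^{(λ)}(tv)] dv = (λ(λ+1)/(2(a+1))) · ∫_0^1 (1 − v²)^{a+1} · C_{2ℓ−2}^{(λ+2)}(tv) dv. -/

import Mathlib

open Real MeasureTheory

/-- Generalized binomial coefficient `C(a, j) = a(a-1)⋯(a-j+1)/j!`. -/
noncomputable def genBinom (a : ℝ) (j : ℕ) : ℝ :=
  (∏ i ∈ Finset.range j, (a - i)) / (Nat.factorial j)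

/-- Jacobi polynomial `P_ℓ^{(α,β)}(x)`. -/
noncomputable def jacobiP (α β : ℝ) (l : ℕ) (x : ℝ) : ℝ :=
  ∑ k ∈ Finset.range (l + 1),
    genBinom ((l : ℝ) + α) (l - k) * genBinom ((l : ℝ) + β) k *
      ((x - 1) / 2) ^ k * ((x + 1) / 2) ^ (l - k)

/-- Gegenbauer (ultraspherical) polynomial `C_m^{(λ)}(x)`. -/
noncomputable def gegenbauerC (m : ℕ) (lam : ℝ) (x : ℝ) : ℝ :=
  ∑ k ∈ Finset.range (m / 2 + 1),
    (-1 : ℝ) ^ k *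
      (Real.Gamma (lam + m - k) /
        (Real.Gamma lam * (Nat.factorial k) * (Nat.factorial (m - 2 * k)))) *
      (2 * x) ^ (m - 2 * k)

/-- Pochhammer symbol `(q)_k = q(q+1)⋯(q+k-1)`. -/
noncomputable def poch (q : ℝ) (k : ℕ) : ℝ := ∏ i ∈ Finset.range k, (q + i)

/-- Terminating Gauss hypergeometric function `₂F₁(-m, b; c; z)`. -/
noncomputable def hyp2F1 (m : ℕ) (b c z : ℝ) : ℝ :=
  ∑ k ∈ Finset.range (m + 1),
    poch (-(m : ℝ)) k * poch b k / (poch c k * (Nat.factorial k)) * z ^ k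

/-- The operator `(Df)(u) = -(1/sin u) f'(u)`. -/
noncomputable def Dop (f : ℝ → ℝ) : ℝ → ℝ := fun u => -(1 / Real.sin u) * deriv f u

lemma gegen_hasDerivAt (m : ℕ) (hm : 1 ≤ m) (lam : ℝ) (hlam : 0 < lam) (x : ℝ) :
    HasDerivAt (gegenbauerC m lam) (2 * lam * gegenbauerC (m - 1) (lam + 1) x) x := by
  have hterm : ∀ k ∈ Finset.range (m / 2 + 1),
      HasDerivAt (fun x : ℝ => (-1 : ℝ) ^ k *
        (Real.Gamma (lam + m - k) /
          (Real.Gamma lam * (Nat.factorial k) * (Nat.factorial (m - 2 * k)))) *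
        (2 * x) ^ (m - 2 * k))
      ((-1 : ℝ) ^ k *
        (Real.Gamma (lam + m - k) /
          (Real.Gamma lam * (Nat.factorial k) * (Nat.factorial (m - 2 * k)))) *
        (((m - 2*k : ℕ) : ℝ) * (2 * x) ^ (m - 2 * k - 1) * 2)) x := by
    intro k _
    have h2x : HasDerivAt (fun x : ℝ => 2 * x) 2 x := by
      simpa using (hasDerivAt_id x).const_mul 2
    exact ((hasDerivAt_pow (m - 2*k) (2*x)).comp x h2x).const_mul _
  have hsum := HasDerivAt.fun_sum hterm
  have key : (∑ k ∈ Finset.range (m / 2 + 1),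
      (-1 : ℝ) ^ k *
        (Real.Gamma (lam + m - k) /
          (Real.Gamma lam * (Nat.factorial k) * (Nat.factorial (m - 2 * k)))) *
        (((m - 2*k : ℕ) : ℝ) * (2 * x) ^ (m - 2 * k - 1) * 2))
      = 2 * lam * gegenbauerC (m - 1) (lam + 1) x := by
    unfold gegenbauerC
    rw [Finset.mul_sum]
    rw [← Finset.sum_subset (Finset.range_subset_range.2 (by omega : (m-1)/2 + 1 ≤ m/2 + 1))]
    · apply Finset.sum_congr rfl
      intro k hk
      have hk' : 2 * k + 1 ≤ m := by
        have := Finset.mem_range.1 hk; omega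
      have h1 : (m - 1 : ℕ) - 2 * k = m - 2 * k - 1 := by omega
      have h2 : ((m - 1 : ℕ) : ℝ) = (m : ℝ) - 1 := by
        push_cast [Nat.cast_sub hm]; ring
      have h3 : (lam + 1) + ((m:ℕ) - 1 : ℕ) - (k : ℝ) = lam + m - k := by
        rw [h2]; ring
      have h4 : (Nat.factorial (m - 2*k) : ℝ)
          = ((m - 2*k : ℕ) : ℝ) * (Nat.factorial (m - 2*k - 1)) := by
        have : m - 2*k = (m - 2*k - 1) + 1 := by omega
        rw [this, Nat.factorial_succ]; push_cast; ring
      rw [h1, h3, Real.Gamma_add_one hlam.ne']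
      have hG : Real.Gamma lam ≠ 0 := (Real.Gamma_pos_of_pos hlam).ne'
      have hkf : (Nat.factorial k : ℝ) ≠ 0 := by positivity
      have hmk : ((m - 2*k : ℕ) : ℝ) ≠ 0 := by
        have : 0 < m - 2*k := by omega
        positivity
      have hmf : (Nat.factorial (m - 2*k - 1) : ℝ) ≠ 0 := by positivity
      rw [h4]
      field_simp
    · intro k hk hk'
      have h0 : m - 2 * k = 0 := by
        have h5 := Finset.mem_range.1 hk
        have h6 : ¬ k < (m - 1) / 2 + 1 := fun h => hk' (Finset.mem_range.2 h)
        omega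
      rw [h0]
      simp
  rw [← key]
  exact hsum

lemma gegen_continuous (m : ℕ) (lam : ℝ) : Continuous (gegenbauerC m lam) := by
  unfold gegenbauerC
  exact continuous_finset_sum _ fun k _ => (continuous_const.mul
    (((continuous_const.mul continuous_id).pow _)))

lemma gegen_odd_zero (m : ℕ) (hm : m % 2 = 1) (lam : ℝ) : gegenbauerC m lam 0 = 0 := by
  unfold gegenbauerC
  apply Finset.sum_eq_zero
  intro k hk
  have : 0 < m - 2 * k := by
    have := Finset.mem_range.1 hk; omega
  rw [mul_zero, zero_pow (by omega), mul_zero]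

lemma integ_aux (a : ℝ) (ha : -1 < a) (h : ℝ → ℝ) (hh : Continuous h) :
    IntervalIntegrable (fun v => (1 - v ^ 2) ^ a * h v) volume 0 1 := by
  have h1 : IntervalIntegrable (fun v : ℝ => (1 - v) ^ a) volume 0 1 := by
    have := (intervalIntegral.intervalIntegrable_rpow' (r := a) (a := 0) (b := 1) ha).comp_sub_left 1
    simpa using this.symm
  have hcont : ContinuousOn (fun v : ℝ => (1 + v) ^ a * h v) (Set.uIcc 0 1) := by
    apply ContinuousOn.mul _ hh.continuousOn
    apply ContinuousOn.rpow_const (by fun_prop)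
    intro x hx
    rw [Set.uIcc_of_le (by norm_num : (0:ℝ) ≤ 1)] at hx
    left
    have := hx.1
    intro hc; linarith [hx.1]
  have h2 : IntervalIntegrable (fun v : ℝ => ((1 + v) ^ a * h v) * (1 - v) ^ a) volume 0 1 :=
    h1.continuousOn_mul hcont
  rw [intervalIntegrable_iff_integrableOn_Ioc_of_le (by norm_num)] at h2 ⊢
  apply h2.congr_fun _ measurableSet_Ioc
  intro v hv
  have hv1 : (0:ℝ) ≤ 1 - v := by linarith [hv.2]
  have hv2 : (0:ℝ) ≤ 1 + v := by linarith [hv.1]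
  have he : (1 - v^2 : ℝ) = (1 - v) * (1 + v) := by ring
  simp only []
  rw [he, Real.mul_rpow hv1 hv2]
  ring

theorem statement_12 (a : ℝ) (ha : -1 < a) (lam : ℝ) (hlam : 0 < lam) (l : ℕ) (hl : 1 ≤ l)
    (t : ℝ) (ht : t ≠ 0) :
    ∫ v in (0 : ℝ)..1,
        (1 - v ^ 2) ^ a * (1 / (4 * t)) * deriv (fun s => gegenbauerC (2 * l) lam (s * v)) t
      = (lam * (lam + 1) / (2 * (a + 1))) *
          ∫ v in (0 : ℝ)..1, (1 - v ^ 2) ^ (a + 1) * gegenbauerC (2 * l - 2) (lam + 2) (t * v) := by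
  have ha1 : (0:ℝ) < a + 1 := by linarith
  set C1 : ℝ → ℝ := gegenbauerC (2 * l - 1) (lam + 1) with hC1def
  set C2 : ℝ → ℝ := gegenbauerC (2 * l - 2) (lam + 2) with hC2def
  have hC1cont : Continuous C1 := gegen_continuous _ _
  have hC2cont : Continuous C2 := gegen_continuous _ _
  -- Step A: derivative in s
  have hderiv : ∀ v : ℝ, deriv (fun s => gegenbauerC (2 * l) lam (s * v)) t
      = 2 * lam * C1 (t * v) * v := by
    intro v
    have hmul : HasDerivAt (fun s : ℝ => s * v) v t := hasDerivAt_mul_const v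
    have h := (gegen_hasDerivAt (2 * l) (by omega) lam hlam (t * v)).comp t hmul
    exact h.deriv
  -- Step B: FTC setup
  set G : ℝ → ℝ := fun v => -(1 - v ^ 2) ^ (a + 1) / (2 * (a + 1)) * C1 (t * v) with hGdef
  set g' : ℝ → ℝ := fun v => (1 - v ^ 2) ^ a * (v * C1 (t * v))
      - (1 - v ^ 2) ^ (a + 1) * ((lam + 1) * t / (a + 1) * C2 (t * v)) with hg'def
  have hC1deriv : ∀ v : ℝ, HasDerivAt (fun v => C1 (t * v))
      (2 * (lam + 1) * C2 (t * v) * t) v := by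
    intro v
    have hmul : HasDerivAt (fun v : ℝ => t * v) t v := by
      simpa using (hasDerivAt_id v).const_mul t
    have h := (gegen_hasDerivAt (2 * l - 1) (by omega) (lam + 1) (by linarith) (t * v)).comp v hmul
    have e1 : 2 * l - 1 - 1 = 2 * l - 2 := by omega
    have e2 : lam + 1 + 1 = lam + 2 := by ring
    rw [e1, e2] at h
    exact h
  have hrpowcont : Continuous (fun y : ℝ => y ^ (a + 1)) :=
    continuous_iff_continuousAt.2 fun y => Real.continuousAt_rpow_const y (a + 1) (Or.inr ha1.le)
  have hGcont : ContinuousOn G (Set.Icc 0 1) := by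
    apply Continuous.continuousOn
    apply Continuous.mul _ (hC1cont.comp (by fun_prop))
    apply Continuous.div_const
    exact (hrpowcont.comp (by fun_prop)).neg
  have hG' : ∀ v ∈ Set.Ioo (0:ℝ) 1, HasDerivAt G (g' v) v := by
    intro v hv
    have hvpos : (0:ℝ) < 1 - v ^ 2 := by nlinarith [hv.1, hv.2]
    have hv2 : HasDerivAt (fun v : ℝ => 1 - v ^ 2) (-(2 * v)) v := by
      simpa using ((hasDerivAt_pow 2 v).const_sub 1)
    have hrp : HasDerivAt (fun y : ℝ => y ^ (a + 1)) ((a + 1) * (1 - v ^ 2) ^ a) (1 - v ^ 2) := by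
      have := Real.hasDerivAt_rpow_const (x := 1 - v ^ 2) (p := a + 1) (Or.inl hvpos.ne')
      simpa using this
    have hF1 : HasDerivAt (fun v : ℝ => (1 - v ^ 2) ^ (a + 1))
        ((a + 1) * (1 - v ^ 2) ^ a * (-(2 * v))) v := by
      have h := hrp.comp v hv2
      exact h
    have hN : HasDerivAt (fun v : ℝ => -(1 - v ^ 2) ^ (a + 1) / (2 * (a + 1)))
        (-((a + 1) * (1 - v ^ 2) ^ a * (-(2 * v))) / (2 * (a + 1))) v := hF1.neg.div_const _
    have hprod := hN.mul (hC1deriv v)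
    have heq : -((a + 1) * (1 - v ^ 2) ^ a * (-(2 * v))) / (2 * (a + 1)) * C1 (t * v)
        + -(1 - v ^ 2) ^ (a + 1) / (2 * (a + 1)) * (2 * (lam + 1) * C2 (t * v) * t)
        = g' v := by
      rw [hg'def]
      field_simp
      ring
    rw [← heq]
    exact hprod
  have hint1 : IntervalIntegrable (fun v => (1 - v ^ 2) ^ a * (v * C1 (t * v)))
      volume 0 1 :=
    integ_aux a ha _ (by fun_prop)
  have hint2 : IntervalIntegrable
      (fun v => (1 - v ^ 2) ^ (a + 1) * ((lam + 1) * t / (a + 1) * C2 (t * v))) volume 0 1 := by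
    apply Continuous.intervalIntegrable
    exact (hrpowcont.comp (by fun_prop)).mul (by fun_prop)
  have hintg' : IntervalIntegrable g' volume 0 1 := hint1.sub hint2
  have hFTC : ∫ v in (0:ℝ)..1, g' v = G 1 - G 0 :=
    intervalIntegral.integral_eq_sub_of_hasDerivAt_of_le (by norm_num) hGcont hG' hintg'
  have hG1 : G 1 = 0 := by
    rw [hGdef]
    norm_num
    rw [Real.zero_rpow (by linarith : a + 1 ≠ 0)]
    simp
  have hG0 : G 0 = 0 := by
    rw [hGdef]
    simp only [mul_zero]
    rw [hC1def, gegen_odd_zero (2 * l - 1) (by omega) (lam + 1)]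
    simp
  rw [hG1, hG0, sub_zero] at hFTC
  have hsplit : (∫ v in (0:ℝ)..1, (1 - v ^ 2) ^ a * (v * C1 (t * v)))
      - ∫ v in (0:ℝ)..1, (1 - v ^ 2) ^ (a + 1) * ((lam + 1) * t / (a + 1) * C2 (t * v)) = 0 := by
    rw [← intervalIntegral.integral_sub hint1 hint2]
    exact hFTC
  have hkey : (∫ v in (0:ℝ)..1, (1 - v ^ 2) ^ a * (v * C1 (t * v)))
      = ((lam + 1) * t / (a + 1)) * ∫ v in (0:ℝ)..1, (1 - v ^ 2) ^ (a + 1) * C2 (t * v) := by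
    rw [← intervalIntegral.integral_const_mul]
    rw [sub_eq_zero] at hsplit
    rw [hsplit]
    congr 1
    funext v
    ring
  -- assemble
  have hLHS : ∀ v : ℝ, (1 - v ^ 2) ^ a * (1 / (4 * t)) * deriv (fun s => gegenbauerC (2 * l) lam (s * v)) t
      = (lam / (2 * t)) * ((1 - v ^ 2) ^ a * (v * C1 (t * v))) := by
    intro v
    rw [hderiv v]
    ring
  calc ∫ v in (0:ℝ)..1,
        (1 - v ^ 2) ^ a * (1 / (4 * t)) * deriv (fun s => gegenbauerC (2 * l) lam (s * v)) t
      = ∫ v in (0:ℝ)..1, (lam / (2 * t)) * ((1 - v ^ 2) ^ a * (v * C1 (t * v))) := by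
        apply intervalIntegral.integral_congr
        intro v _
        exact hLHS v
    _ = (lam / (2 * t)) * ∫ v in (0:ℝ)..1, (1 - v ^ 2) ^ a * (v * C1 (t * v)) :=
        intervalIntegral.integral_const_mul _ _
    _ = (lam / (2 * t)) * (((lam + 1) * t / (a + 1)) *
          ∫ v in (0:ℝ)..1, (1 - v ^ 2) ^ (a + 1) * C2 (t * v)) := by rw [hkey]
    _ = (lam * (lam + 1) / (2 * (a + 1))) *
          ∫ v in (0:ℝ)..1, (1 - v ^ 2) ^ (a + 1) * C2 (t * v) := by
        rw [← mul_assoc]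
        congr 1
        field_simp
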